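/- arXiv:1411.2290 — 5 statements merged into one kernel-verified Lean document; each statement's English description precedes it below -/
import Mathlib

section
/- Let 𝒰 be a G-set for a group G, and let M denote the monoid of G-equivariant injective self-maps of 𝒰 under composition. Let A be a module over the monoid ring ℤ[M] which is tame, meaning every element a ∈ A is of filtration M₀ for some finite G-invariant subset M₀ ⊆ 𝒰 (i.e., every ψ ∈ M fixing M₀ pointwise acts trivially on a). Suppose 𝒰 is a G-set universe, i.e., every G-equivariant injection of a finite G-invariant subset of 𝒰 into 𝒰 extends to a G-equivariant bijection of 𝒰. If two injections ψ, ψ' ∈ M agree on a finite G-invariant subset M₀ of 𝒰, then ψ·a = ψ'·a for every element a ∈ A of filtration M₀. -/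
/-- A `G`-set universe: a countably infinite `G`-set which is `G`-equivariantly
isomorphic to the disjoint union of two copies of itself. -/
def IsGSetUniverse (G U : Type*) [Group G] [MulAction G U] : Prop :=
  Countable U ∧ Infinite U ∧
    ∃ e : U ≃ (U ⊕ U), ∀ (g : G) (x : U),
      e (g • x) = Sum.map (fun y => g • y) (fun y => g • y) (e x)

/-- The monoid `Inj_G(𝒰,𝒰)` of `G`-equivariant injective self-maps of `U`,
as a submonoid of `Function.End U` (composition). -/
def injGMonoid (G U : Type*) [Group G] [MulAction G U] : Submonoid (Function.End U) where
  carrier := {f | Function.Injective f ∧ ∀ (g : G) (x : U), f (g • x) = g • f x}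
  one_mem' := ⟨fun _ _ h => h, fun _ _ => rfl⟩
  mul_mem' := by
    rintro f₁ f₂ ⟨h1, h2⟩ ⟨h3, h4⟩
    refine ⟨h1.comp h3, fun g x => ?_⟩
    show f₁ (f₂ (g • x)) = g • f₁ (f₂ x)
    rw [h4, h2]

open Function Set

section Aux

variable {G U : Type*} [Group G] [MulAction G U]

/-- iterates of an equivariant map are equivariant -/
lemma iter_equivariant {u : U → U} (hequ : ∀ (g : G) (x : U), u (g • x) = g • u x)
    (n : ℕ) (g : G) (x : U) : u^[n] (g • x) = g • u^[n] x := by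
  induction n generalizing x with
  | zero => simp
  | succ n ih =>
    rw [Function.iterate_succ_apply, hequ, ih, Function.iterate_succ_apply]

/-- Hilbert hotel: absorb an invariant set `T` disjoint from the range of an
equivariant injection `u`. -/
lemma lemA {u : U → U} (hu : Function.Injective u)
    (hequ : ∀ (g : G) (x : U), u (g • x) = g • u x)
    {T : Set U} (hT : ∀ (g : G), ∀ x ∈ T, g • x ∈ T) (hdisj : ∀ x, u x ∉ T) :
    ∃ f : U → U, Function.Injective f ∧ (∀ (g : G) (x : U), f (g • x) = g • f x) ∧
      Set.range f = Tᶜ := by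
  classical
  set W : Set U := ⋃ n : ℕ, u^[n] '' T with hW
  have hW1 : ∀ (g : G), ∀ x ∈ W, g • x ∈ W := by
    rintro g x hx
    obtain ⟨n, t, ht, rfl⟩ := by simpa [hW] using hx
    exact mem_iUnion.2 ⟨n, ⟨g • t, hT g t ht, iter_equivariant hequ n g t⟩⟩
  have hWiff : ∀ (g : G) (x : U), g • x ∈ W ↔ x ∈ W := by
    intro g x
    constructor
    · intro h
      have := hW1 g⁻¹ _ h
      simpa using this
    · exact hW1 g x
  have hTW : T ⊆ W := by
    intro t ht
    exact mem_iUnion.2 ⟨0, by simpa using ht⟩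
  have huW : ∀ x ∈ W, u x ∈ W := by
    rintro x hx
    obtain ⟨n, t, ht, rfl⟩ := by simpa [hW] using hx
    exact mem_iUnion.2 ⟨n + 1, t, ht, by rw [Function.iterate_succ_apply']⟩
  refine ⟨fun x => if x ∈ W then u x else x, ?_, ?_, ?_⟩
  · intro x y hxy
    by_cases hx : x ∈ W <;> by_cases hy : y ∈ W <;> simp only [hx, hy, if_pos, if_neg,
      if_true, if_false] at hxy
    · exact hu hxy
    · exact absurd (hxy ▸ huW x hx) hy
    · exact absurd (hxy.symm ▸ huW y hy) hx
    · exact hxy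
  · intro g x
    show (if g • x ∈ W then u (g • x) else g • x) = g • (if x ∈ W then u x else x)
    by_cases hx : x ∈ W
    · rw [if_pos ((hWiff g x).2 hx), if_pos hx, hequ]
    · rw [if_neg (fun h => hx ((hWiff g x).1 h)), if_neg hx]
  · ext y
    simp only [Set.mem_range, Set.mem_compl_iff]
    constructor
    · rintro ⟨x, rfl⟩
      by_cases hx : x ∈ W
      · rw [if_pos hx]; exact hdisj x
      · rw [if_neg hx]; exact fun h => hx (hTW h)
    · intro hy
      by_cases hyW : y ∈ W
      · obtain ⟨n, t, ht, rfl⟩ := by simpa [hW] using hyW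
        cases n with
        | zero => exact absurd ht (by simpa using hy)
        | succ m =>
          refine ⟨u^[m] t, ?_⟩
          have hm : u^[m] t ∈ W := mem_iUnion.2 ⟨m, t, ht, rfl⟩
          rw [if_pos hm, Function.iterate_succ_apply']
      · exact ⟨y, by rw [if_neg hyW]⟩

/-- From a universe, get an equivariant injection avoiding a given finite set. -/
lemma exists_avoid (huniv : IsGSetUniverse G U) {S : Set U} (hS : S.Finite) :
    ∃ u : U → U, Function.Injective u ∧ (∀ (g : G) (x : U), u (g • x) = g • u x) ∧
      ∀ x, u x ∉ S := by
  classical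
  obtain ⟨-, -, e, he⟩ := huniv
  set ι₁ : U → U := fun x => e.symm (Sum.inl x) with hι₁
  set ι₂ : U → U := fun x => e.symm (Sum.inr x) with hι₂
  have hinj1 : Function.Injective ι₁ := fun x y h => by
    simpa using e.symm.injective h
  have hinj2 : Function.Injective ι₂ := fun x y h => by
    simpa using e.symm.injective h
  have hequ1 : ∀ (g : G) (x : U), ι₁ (g • x) = g • ι₁ x := by
    intro g x
    apply e.injective
    rw [he]
    simp [hι₁]
  have hequ2 : ∀ (g : G) (x : U), ι₂ (g • x) = g • ι₂ x := by
    intro g x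
    apply e.injective
    rw [he]
    simp [hι₂]
  have hdisj12 : ∀ x y, ι₁ x ≠ ι₂ y := fun x y h =>
    Sum.inl_ne_inr (e.symm.injective h)
  -- the sets range (ι₂^[k] ∘ ι₁) are pairwise disjoint
  have hpair : ∀ j k : ℕ, j < k → ∀ x y : U, ι₂^[j] (ι₁ x) ≠ ι₂^[k] (ι₁ y) := by
    intro j k hjk x y h
    have h2 : ι₁ x = ι₂^[k - j] (ι₁ y) := by
      have : ι₂^[j] (ι₁ x) = ι₂^[j] (ι₂^[k - j] (ι₁ y)) := by
        rw [← Function.iterate_add_apply]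
        rwa [Nat.add_sub_cancel' hjk.le]
      exact hinj2.iterate j this
    obtain ⟨m, hm⟩ : ∃ m, k - j = m + 1 := ⟨k - j - 1, by omega⟩
    rw [hm, Function.iterate_succ_apply'] at h2
    exact hdisj12 x _ h2
  -- pigeonhole: some level avoids S
  set n := hS.toFinset.card with hn
  have : ∃ k ≤ n, ∀ x, ι₂^[k] (ι₁ x) ∉ S := by
    by_contra hcon
    push_neg at hcon
    choose c hc using hcon
    set f : Fin (n + 1) → U := fun k => ι₂^[(k : ℕ)] (ι₁ (c k (by omega))) with hf
    have hfS : ∀ k, f k ∈ hS.toFinset := fun k => hS.mem_toFinset.2 (hc _ _)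
    have hfinj : Function.Injective f := by
      intro j k h
      by_contra hne
      rcases lt_or_gt_of_ne (fun hh : (j:ℕ) = (k:ℕ) => hne (Fin.ext hh)) with hlt | hlt
      · exact hpair _ _ hlt _ _ h
      · exact hpair _ _ hlt _ _ h.symm
    have := Fintype.card_le_of_injective (fun k : Fin (n+1) => (⟨f k, hfS k⟩ : hS.toFinset)) 
      (fun j k h => hfinj (congrArg Subtype.val h))
    simp [← hn] at this
  obtain ⟨k, -, hk⟩ := this
  refine ⟨fun x => ι₂^[k] (ι₁ x), (hinj2.iterate k).comp hinj1, ?_, hk⟩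
  intro g x
  dsimp only
  rw [hequ1, iter_equivariant hequ2]

/-- A bijection from `U` onto the complement of a finite invariant set. -/
lemma exists_complement (huniv : IsGSetUniverse G U) {S : Set U} (hS : S.Finite)
    (hSinv : ∀ (g : G), ∀ x ∈ S, g • x ∈ S) :
    ∃ f : U → U, Function.Injective f ∧ (∀ (g : G) (x : U), f (g • x) = g • f x) ∧
      Set.range f = Sᶜ := by
  obtain ⟨u, hu, hequ, hav⟩ := exists_avoid huniv hS
  exact lemA hu hequ hSinv hav

end Aux

/-- if `A` is a tame module over the monoid of `G`-equivariant injective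
self-maps of a `G`-set universe `𝒰`, and two injections `ψ, ψ'` agree on a finite
`G`-invariant subset `M₀` of `𝒰`, then `ψ • a = ψ' • a` for every `a` of filtration `M₀`. -/
theorem tame_action_agree_of_eqOn {G U A : Type*} [Group G] [MulAction G U]
    [AddCommGroup A] [DistribMulAction (↥(injGMonoid G U)) A]
    (huniv : IsGSetUniverse G U)
    (htame : ∀ a : A, ∃ M₀ : Set U, M₀.Finite ∧ (∀ (g : G), ∀ x ∈ M₀, g • x ∈ M₀) ∧
      ∀ ψ : injGMonoid G U, (∀ x ∈ M₀, ψ.val x = x) → ψ • a = a)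
    (M₀ : Set U) (hfin : M₀.Finite) (hinv : ∀ (g : G), ∀ x ∈ M₀, g • x ∈ M₀)
    (ψ ψ' : injGMonoid G U) (hagree : ∀ x ∈ M₀, ψ.val x = ψ'.val x)
    (a : A) (ha : ∀ χ : injGMonoid G U, (∀ x ∈ M₀, χ.val x = x) → χ • a = a) :
    ψ • a = ψ' • a := by
  classical
  haveI : Infinite U := huniv.2.1
  haveI : Nonempty U := inferInstance
  set N₀ : Set U := ψ.val '' M₀ with hN
  have hNfin : N₀.Finite := hfin.image _
  have hNinv : ∀ (g : G), ∀ y ∈ N₀, g • y ∈ N₀ := by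
    rintro g y ⟨x, hx, rfl⟩
    exact ⟨g • x, hinv g x hx, (ψ.prop.2 g x)⟩
  obtain ⟨f, hfInj, hfEqu, hfRange⟩ := exists_complement huniv hfin hinv
  obtain ⟨w, hwInj, hwEqu, hwRange⟩ := exists_complement huniv hNfin hNinv
  have hMiff : ∀ (g : G) (x : U), g • x ∈ M₀ ↔ x ∈ M₀ := by
    intro g x
    exact ⟨fun h => by simpa using hinv g⁻¹ _ h, hinv g x⟩
  have hfr : ∀ x, x ∉ M₀ → f (Function.invFun f x) = x := by
    intro x hx
    apply Function.invFun_eq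
    have : x ∈ Set.range f := by rw [hfRange]; exact hx
    exact this
  have hfl : ∀ z, Function.invFun f (f z) = z := Function.leftInverse_invFun hfInj
  have hfiEqu : ∀ (g : G) (x : U), x ∉ M₀ → Function.invFun f (g • x) = g • Function.invFun f x := by
    intro g x hx
    apply hfInj
    rw [hfr _ (fun h => hx ((hMiff g x).1 h)), hfEqu, hfr _ hx]
  set θ : U → U := fun x => if x ∈ M₀ then ψ.val x else w (Function.invFun f x) with hθ
  have hθM : ∀ x ∈ M₀, θ x = ψ.val x := fun x hx => if_pos hx
  have hθC : ∀ x, x ∉ M₀ → θ x = w (Function.invFun f x) := fun x hx => if_neg hx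
  have hwN : ∀ z, w z ∉ N₀ := by
    intro z hz
    have : w z ∈ Set.range w := ⟨z, rfl⟩
    rw [hwRange] at this
    exact this hz
  have hθInj : Function.Injective θ := by
    intro x y hxy
    by_cases hx : x ∈ M₀ <;> by_cases hy : y ∈ M₀
    · exact ψ.prop.1 (by rwa [hθM x hx, hθM y hy] at hxy)
    · exact absurd (hxy ▸ (hθM x hx ▸ ⟨x, hx, rfl⟩ : θ x ∈ N₀)) (hθC y hy ▸ hwN _)
    · exact absurd ((hxy.symm ▸ (hθM y hy ▸ ⟨y, hy, rfl⟩ : θ y ∈ N₀)) : θ x ∈ N₀)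
        (hθC x hx ▸ hwN _)
    · rw [hθC x hx, hθC y hy] at hxy
      have := hwInj hxy
      have h2 := congrArg f this
      rwa [hfr x hx, hfr y hy] at h2
  have hθEqu : ∀ (g : G) (x : U), θ (g • x) = g • θ x := by
    intro g x
    by_cases hx : x ∈ M₀
    · rw [hθM _ ((hMiff g x).2 hx), hθM x hx, ψ.prop.2]
    · rw [hθC _ (fun h => hx ((hMiff g x).1 h)), hθC x hx, hfiEqu g x hx, hwEqu]
  have hθSurj : Function.Surjective θ := by
    intro y
    by_cases hy : y ∈ N₀
    · obtain ⟨v, hv, rfl⟩ := hy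
      exact ⟨v, hθM v hv⟩
    · have : y ∈ Set.range w := by rw [hwRange]; exact hy
      obtain ⟨z, rfl⟩ := this
      have hfz : f z ∉ M₀ := by
        have : f z ∈ Set.range f := ⟨z, rfl⟩
        rw [hfRange] at this
        exact this
      exact ⟨f z, by rw [hθC _ hfz, hfl]⟩
  set θi : U → U := Function.invFun θ with hθi
  have hθri : ∀ x, θ (θi x) = x := fun x => Function.invFun_eq (hθSurj x)
  have hθli : ∀ x, θi (θ x) = x := fun x => Function.leftInverse_invFun hθInj x
  have hθiInj : Function.Injective θi := fun x y h => by
    rw [← hθri x, ← hθri y, h]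
  have hθiEqu : ∀ (g : G) (x : U), θi (g • x) = g • θi x := by
    intro g x
    apply hθInj
    rw [hθri, hθEqu, hθri]
  set Θ : injGMonoid G U := ⟨θ, hθInj, hθEqu⟩ with hΘd
  set Θi : injGMonoid G U := ⟨θi, hθiInj, hθiEqu⟩ with hΘid
  have hΘ : Θ * Θi = 1 := by
    apply Subtype.ext
    funext x
    exact hθri x
  have hfix : ∀ x ∈ M₀, (Θi * ψ).val x = x := by
    intro x hx
    show θi (ψ.val x) = x
    rw [← hθM x hx, hθli]
  have hfix' : ∀ x ∈ M₀, (Θi * ψ').val x = x := by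
    intro x hx
    show θi (ψ'.val x) = x
    rw [← hagree x hx, ← hθM x hx, hθli]
  calc ψ • a = (Θ * (Θi * ψ)) • a := by rw [← mul_assoc, hΘ, one_mul]
    _ = Θ • ((Θi * ψ) • a) := mul_smul _ _ _
    _ = Θ • a := by rw [ha (Θi * ψ) hfix]
    _ = Θ • ((Θi * ψ') • a) := by rw [ha (Θi * ψ') hfix']
    _ = (Θ * (Θi * ψ')) • a := (mul_smul _ _ _).symm
    _ = ψ' • a := by rw [← mul_assoc, hΘ, one_mul]
end

section
/- Let 𝒰 be a G-set universe, M = Inj_G(𝒰,𝒰) the monoid of G-equivariant injective self-maps, and A a tame M-module. Then every element ψ ∈ M acts injectively on A. -/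
/-- every `G`-equivariant injective self-map of a `G`-set universe `𝒰`
acts injectively on any tame module over `Inj_G(𝒰,𝒰)`. -/
theorem tame_action_injective {G U A : Type*} [Group G] [MulAction G U]
    [AddCommGroup A] [DistribMulAction (↥(injGMonoid G U)) A]
    (huniv : IsGSetUniverse G U)
    (htame : ∀ a : A, ∃ M₀ : Set U, M₀.Finite ∧ (∀ (g : G), ∀ x ∈ M₀, g • x ∈ M₀) ∧
      ∀ ψ : injGMonoid G U, (∀ x ∈ M₀, ψ.val x = x) → ψ • a = a)
    (ψ : injGMonoid G U) :
    Function.Injective (fun a : A => ψ • a) := by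
  classical
  obtain ⟨-, -, e, he⟩ := huniv
  obtain ⟨ψinj, ψeq⟩ := ψ.2
  intro a b hab
  have hab' : ψ • a = ψ • b := hab
  obtain ⟨Ma, hMaf, hMaG, hMa⟩ := htame a
  obtain ⟨Mb, hMbf, hMbG, hMb⟩ := htame b
  set M₀ : Set U := Ma ∪ Mb with hM₀def
  have hM₀f : M₀.Finite := hMaf.union hMbf
  have hM₀G : ∀ (g : G), ∀ x ∈ M₀, g • x ∈ M₀ := by
    rintro g x (h | h)
    · exact Or.inl (hMaG g x h)
    · exact Or.inr (hMbG g x h)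
  set i₁ : U → U := fun x => e.symm (Sum.inl x) with hi₁def
  set i₂ : U → U := fun x => e.symm (Sum.inr x) with hi₂def
  have hesymm : ∀ (g : G) (s : U ⊕ U),
      e.symm (Sum.map (fun y => g • y) (fun y => g • y) s) = g • e.symm s := by
    intro g s
    apply e.injective
    rw [he, Equiv.apply_symm_apply, Equiv.apply_symm_apply]
  have hi₁eq : ∀ (g : G) (x : U), i₁ (g • x) = g • i₁ x := fun g x => hesymm g (Sum.inl x)
  have hi₂eq : ∀ (g : G) (x : U), i₂ (g • x) = g • i₂ x := fun g x => hesymm g (Sum.inr x)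
  have hi₁inj : Function.Injective i₁ := by
    intro x y h
    exact Sum.inl.inj (e.symm.injective h)
  have hi₂inj : Function.Injective i₂ := by
    intro x y h
    exact Sum.inr.inj (e.symm.injective h)
  have hdisj : ∀ x y : U, i₁ x ≠ i₂ y := by
    intro x y h
    exact absurd (e.symm.injective h) (by simp)
  have hiterinj : ∀ n : ℕ, Function.Injective (i₁^[n]) := fun n => hi₁inj.iterate n
  have hitereq : ∀ (n : ℕ) (g : G) (x : U), i₁^[n] (g • x) = g • i₁^[n] x := by
    intro n
    induction n with
    | zero => intro g x; rfl
    | succ m ih =>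
      intro g x
      rw [Function.iterate_succ_apply', Function.iterate_succ_apply', ih, hi₁eq]
  have hpair : ∀ (k l : ℕ) (x y : U), k < l → i₁^[k] (i₂ x) ≠ i₁^[l] (i₂ y) := by
    intro k l x y hkl h
    obtain ⟨d, rfl⟩ : ∃ d, l = k + (d + 1) := ⟨l - k - 1, by omega⟩
    rw [Function.iterate_add_apply] at h
    have h2 : i₂ x = i₁^[d + 1] (i₂ y) := hiterinj k h
    rw [Function.iterate_succ_apply'] at h2
    exact hdisj _ _ h2.symm
  -- find k with range (i₁^[k] ∘ i₂) disjoint from M₀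
  have hT : ∃ k : ℕ, ∀ x ∈ M₀, ∀ y : U, i₁^[k] (i₂ y) ≠ x := by
    set T : Set ℕ := {k | ∃ x ∈ M₀, ∃ y : U, i₁^[k] (i₂ y) = x} with hTdef
    have hw : ∀ k ∈ T, ∃ x, x ∈ M₀ ∧ ∃ y : U, i₁^[k] (i₂ y) = x := fun k hk => hk
    choose w hw1 hw2 using hw
    have hinjOn : Set.InjOn (fun k : T => w k k.2) Set.univ := by
      rintro ⟨k, hk⟩ - ⟨l, hl⟩ - h
      simp only at h
      obtain ⟨y, hy⟩ := hw2 k hk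
      obtain ⟨z, hz⟩ := hw2 l hl
      by_contra hne
      have hkl : k ≠ l := by simpa using hne
      rcases lt_or_gt_of_ne hkl with h' | h'
      · exact hpair k l y z h' (by rw [hy, hz, h])
      · exact hpair l k z y h' (by rw [hy, hz, h])
    have hTfin : T.Finite := by
      have : Finite T := by
        have himg : Set.Finite ((fun k : T => w k k.2) '' Set.univ) :=
          hM₀f.subset (by rintro x ⟨⟨k, hk⟩, -, rfl⟩; exact hw1 k hk)
        exact Set.finite_univ_iff.mp (Set.Finite.of_finite_image himg hinjOn)
      exact Set.toFinite T
    obtain ⟨k, hk⟩ := hTfin.infinite_compl.nonempty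
    refine ⟨k, fun x hx y hy => hk ⟨x, hx, y, hy⟩⟩
  obtain ⟨k, hk⟩ := hT
  -- define the retraction θ
  set θ : U → U := fun x =>
    if h : ∃ m ∈ M₀, ψ.val m = x then h.choose else i₁^[k] (i₂ x) with hθdef
  have hθpos : ∀ (x : U) (h : ∃ m ∈ M₀, ψ.val m = x),
      θ x = h.choose ∧ h.choose ∈ M₀ ∧ ψ.val h.choose = x := by
    intro x h
    exact ⟨by rw [hθdef]; exact dif_pos h, h.choose_spec.1, h.choose_spec.2⟩
  have hθneg : ∀ (x : U), ¬ (∃ m ∈ M₀, ψ.val m = x) → θ x = i₁^[k] (i₂ x) := by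
    intro x h
    rw [hθdef]; exact dif_neg h
  have hSinv : ∀ (g : G) (x : U), (∃ m ∈ M₀, ψ.val m = x) → ∃ m ∈ M₀, ψ.val m = g • x := by
    rintro g x ⟨m, hm, rfl⟩
    exact ⟨g • m, hM₀G g m hm, ψeq g m⟩
  have hθeq : ∀ (g : G) (x : U), θ (g • x) = g • θ x := by
    intro g x
    by_cases hx : ∃ m ∈ M₀, ψ.val m = x
    · have hgx := hSinv g x hx
      obtain ⟨e1, _, e3⟩ := hθpos x hx
      obtain ⟨f1, _, f3⟩ := hθpos (g • x) hgx
      rw [e1, f1]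
      apply ψinj
      rw [f3, ψeq, e3]
    · have hgx : ¬ ∃ m ∈ M₀, ψ.val m = g • x := by
        intro h
        have := hSinv g⁻¹ (g • x) h
        rw [inv_smul_smul] at this
        exact hx this
      rw [hθneg x hx, hθneg (g • x) hgx, hi₂eq, hitereq]
  have hθinj : Function.Injective θ := by
    intro x y h
    by_cases hx : ∃ m ∈ M₀, ψ.val m = x <;> by_cases hy : ∃ m ∈ M₀, ψ.val m = y
    · obtain ⟨e1, _, e3⟩ := hθpos x hx
      obtain ⟨f1, _, f3⟩ := hθpos y hy
      rw [e1, f1] at h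
      rw [← e3, ← f3, h]
    · obtain ⟨e1, e2, -⟩ := hθpos x hx
      rw [e1, hθneg y hy] at h
      exact absurd h.symm (hk _ e2 y)
    · obtain ⟨f1, f2, -⟩ := hθpos y hy
      rw [f1, hθneg x hx] at h
      exact absurd h (hk _ f2 x)
    · rw [hθneg x hx, hθneg y hy] at h
      exact hi₂inj (hiterinj k h)
  set Θ : injGMonoid G U := ⟨θ, hθinj, hθeq⟩ with hΘdef
  have hkey : ∀ x ∈ M₀, (Θ * ψ).val x = x := by
    intro x hx
    have hmem : ∃ m ∈ M₀, ψ.val m = ψ.val x := ⟨x, hx, rfl⟩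
    obtain ⟨e1, -, e3⟩ := hθpos (ψ.val x) hmem
    have : (Θ * ψ).val x = θ (ψ.val x) := rfl
    rw [this, e1]
    exact ψinj e3
  have ha : (Θ * ψ) • a = a := hMa (Θ * ψ) (fun x hx => hkey x (Or.inl hx))
  have hb : (Θ * ψ) • b = b := hMb (Θ * ψ) (fun x hx => hkey x (Or.inr hx))
  calc a = (Θ * ψ) • a := ha.symm
    _ = Θ • (ψ • a) := mul_smul Θ ψ a
    _ = Θ • (ψ • b) := by rw [hab']
    _ = (Θ * ψ) • b := (mul_smul Θ ψ b).symm
    _ = b := hb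
end

section
/- Let 𝒰 be a G-set universe and A a tame module over the monoid M = Inj_G(𝒰,𝒰). If a ∈ A does not have filtration ∅ (i.e., there exists ψ ∈ M with ψ·a ≠ a), and d^{M₀} : 𝒰 ↪ 𝒰 is a G-equivariant injection with image the complement 𝒰 ∖ M₀ of a finite G-subset M₀ ⊆ 𝒰, then d^{M₀}·a does not have filtration M₀ (i.e., there exists an injection fixing M₀ pointwise that acts nontrivially on d^{M₀}·a). -/
section AuxShift

open scoped Classical

variable {G U : Type*} [Group G] [MulAction G U]

/-- Iterates of an equivariant map are equivariant. -/
lemma aux_iterate_equiv {d : U → U} (hequiv : ∀ (g : G) (x : U), d (g • x) = g • d x)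
    (k : ℕ) (g : G) (x : U) : d^[k] (g • x) = g • d^[k] x := by
  induction k with
  | zero => rfl
  | succ k ih =>
    rw [Function.iterate_succ_apply', Function.iterate_succ_apply', ih, hequiv]

/-- Uniqueness of "levels": the sets `d^[k] '' M₀` are pairwise disjoint. -/
lemma aux_level_unique {d : U → U} {M₀ : Set U} (hinj : Function.Injective d)
    (hr : Set.range d = M₀ᶜ) :
    ∀ (k j : ℕ) (y y' : U), y ∈ M₀ → y' ∈ M₀ → d^[k] y = d^[j] y' → k = j := by
  intro k
  induction k with
  | zero =>
    intro j y y' hy hy' h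
    cases j with
    | zero => rfl
    | succ j =>
      exfalso
      rw [Function.iterate_succ_apply'] at h
      have : y ∈ Set.range d := ⟨d^[j] y', h.symm⟩
      rw [hr] at this; exact this hy
  | succ k ih =>
    intro j y y' hy hy' h
    cases j with
    | zero =>
      exfalso
      rw [Function.iterate_succ_apply'] at h
      have : y' ∈ Set.range d := ⟨d^[k] y, h⟩
      rw [hr] at this; exact this hy'
    | succ j =>
      rw [Function.iterate_succ_apply', Function.iterate_succ_apply'] at h
      exact congrArg Nat.succ (ih j y y' hy hy' (hinj h))

variable [Nonempty U]

/-- The auxiliary map `e` which is a one-sided inverse of `d` on elements of small level. -/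
noncomputable def auxE (d : U → U) (M₀ : Set U) (n : ℕ) : U → U := fun x =>
  if x ∈ M₀ ∨ ∃ k > n, ∃ y ∈ M₀, d^[k] y = x then d^[n] x
  else Function.invFun d x

lemma auxE_apply_d {d : U → U} {M₀ : Set U} (hinj : Function.Injective d)
    (hr : Set.range d = M₀ᶜ) (n : ℕ) (s : U)
    (hs : ∀ k y, y ∈ M₀ → d^[k] y = s → k < n) :
    auxE d M₀ n (d s) = s := by
  have h1 : d s ∉ M₀ := by
    have : d s ∈ Set.range d := ⟨s, rfl⟩
    rw [hr] at this; exact this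
  have h2 : ¬ ∃ k > n, ∃ y ∈ M₀, d^[k] y = d s := by
    rintro ⟨k, hk, y, hy, hky⟩
    cases k with
    | zero => exact h1 (hky ▸ hy)
    | succ k =>
      rw [Function.iterate_succ_apply'] at hky
      have := hs k y hy (hinj hky)
      omega
  rw [auxE, if_neg (fun h => h.elim h1 h2)]
  exact Function.leftInverse_invFun hinj (s)

lemma auxE_mem {d : U → U} {M₀ : Set U} (hinj : Function.Injective d)
    (hr : Set.range d = M₀ᶜ)
    (hequiv : ∀ (g : G) (x : U), d (g • x) = g • d x)
    (hMinv : ∀ (g : G), ∀ x ∈ M₀, g • x ∈ M₀) (n : ℕ) :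
    auxE d M₀ n ∈ injGMonoid G U := by
  have hrange : ∀ x : U, x ∉ M₀ → x ∈ Set.range d := by
    intro x hx; rw [hr]; exact hx
  have hinv_d : ∀ x ∈ Set.range d, d (Function.invFun d x) = x := by
    intro x hx; exact Function.invFun_eq hx
  constructor
  · -- injectivity
    intro x x' hxx'
    by_cases hx : x ∈ M₀ ∨ ∃ k > n, ∃ y ∈ M₀, d^[k] y = x
      <;> by_cases hx' : x' ∈ M₀ ∨ ∃ k > n, ∃ y ∈ M₀, d^[k] y = x'
    · -- both branch A
      simp only [auxE] at hxx'
      rw [if_pos hx, if_pos hx'] at hxx'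
      exact hinj.iterate n hxx'
    · -- A vs B : contradiction
      exfalso
      simp only [auxE] at hxx'
      rw [if_pos hx, if_neg hx'] at hxx'
      have hx'r : x' ∈ Set.range d := hrange x' (fun h => hx' (Or.inl h))
      have hxd : d (d^[n] x) = x' := by
        rw [hxx']; exact hinv_d x' hx'r
      apply hx'
      rcases hx with hxM | ⟨k, hk, y, hy, hky⟩
      · refine Or.inr ⟨n + 1, by omega, x, hxM, ?_⟩
        rw [Function.iterate_succ_apply', hxd]
      · refine Or.inr ⟨n + 1 + k, by omega, y, hy, ?_⟩
        have : d^[n+k] y = d^[n] x := by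
          rw [Function.iterate_add_apply, hky]
        rw [show n + 1 + k = (n + k) + 1 by omega, Function.iterate_succ_apply', this, hxd]
    · -- B vs A : symmetric
      exfalso
      simp only [auxE] at hxx'
      rw [if_neg hx, if_pos hx'] at hxx'
      have hxr : x ∈ Set.range d := hrange x (fun h => hx (Or.inl h))
      have hxd : d (d^[n] x') = x := by
        rw [← hxx']; exact hinv_d x hxr
      apply hx
      rcases hx' with hxM | ⟨k, hk, y, hy, hky⟩
      · refine Or.inr ⟨n + 1, by omega, x', hxM, ?_⟩
        rw [Function.iterate_succ_apply', hxd]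
      · refine Or.inr ⟨n + 1 + k, by omega, y, hy, ?_⟩
        have : d^[n+k] y = d^[n] x' := by
          rw [Function.iterate_add_apply, hky]
        rw [show n + 1 + k = (n + k) + 1 by omega, Function.iterate_succ_apply', this, hxd]
    · -- both branch B
      simp only [auxE] at hxx'
      rw [if_neg hx, if_neg hx'] at hxx'
      have hxr : x ∈ Set.range d := hrange x (fun h => hx (Or.inl h))
      have hx'r : x' ∈ Set.range d := hrange x' (fun h => hx' (Or.inl h))
      calc x = d (Function.invFun d x) := (hinv_d x hxr).symm
      _ = d (Function.invFun d x') := by rw [hxx']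
      _ = x' := hinv_d x' hx'r
  · -- equivariance
    intro g x
    have hcond : (g • x ∈ M₀ ∨ ∃ k > n, ∃ y ∈ M₀, d^[k] y = g • x)
        ↔ (x ∈ M₀ ∨ ∃ k > n, ∃ y ∈ M₀, d^[k] y = x) := by
      constructor
      · rintro (h | ⟨k, hk, y, hy, hky⟩)
        · left
          have := hMinv g⁻¹ _ h
          rwa [inv_smul_smul] at this
        · right
          refine ⟨k, hk, g⁻¹ • y, hMinv g⁻¹ _ hy, ?_⟩
          rw [aux_iterate_equiv hequiv, hky, inv_smul_smul]
      · rintro (h | ⟨k, hk, y, hy, hky⟩)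
        · exact Or.inl (hMinv g _ h)
        · exact Or.inr ⟨k, hk, g • y, hMinv g _ hy, by rw [aux_iterate_equiv hequiv, hky]⟩
    by_cases hx : x ∈ M₀ ∨ ∃ k > n, ∃ y ∈ M₀, d^[k] y = x
    · rw [auxE, if_pos (hcond.mpr hx)]
      rw [auxE, if_pos hx]
      exact aux_iterate_equiv hequiv n g x
    · rw [auxE, if_neg (fun h => hx (hcond.mp h)), auxE, if_neg hx]
      -- invFun is equivariant on the range
      have hxr : x ∈ Set.range d := hrange x (fun h => hx (Or.inl h))
      have hgxr : g • x ∈ Set.range d := by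
        rcases hxr with ⟨w, hw⟩
        exact ⟨g • w, by rw [hequiv, hw]⟩
      apply hinj
      rw [hinv_d _ hgxr, hequiv, hinv_d _ hxr]

/-- The conjugate `χ = d ∘ ψ ∘ d⁻¹` extended by the identity on `M₀`. -/
noncomputable def auxChi (d ψ : U → U) (M₀ : Set U) : U → U := fun x =>
  if x ∈ M₀ then x else d (ψ (Function.invFun d x))

lemma auxChi_fix {d ψ : U → U} {M₀ : Set U} (x : U) (hx : x ∈ M₀) :
    auxChi d ψ M₀ x = x := if_pos hx

lemma auxChi_apply_d {d ψ : U → U} {M₀ : Set U} (hinj : Function.Injective d)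
    (hr : Set.range d = M₀ᶜ) (x : U) :
    auxChi d ψ M₀ (d x) = d (ψ x) := by
  have h1 : d x ∉ M₀ := by
    have : d x ∈ Set.range d := ⟨x, rfl⟩
    rw [hr] at this; exact this
  rw [auxChi, if_neg h1, Function.leftInverse_invFun hinj]

lemma auxChi_mem {d ψ : U → U} {M₀ : Set U} (hinj : Function.Injective d)
    (hr : Set.range d = M₀ᶜ)
    (hequiv : ∀ (g : G) (x : U), d (g • x) = g • d x)
    (hψinj : Function.Injective ψ)
    (hψequiv : ∀ (g : G) (x : U), ψ (g • x) = g • ψ x)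
    (hMinv : ∀ (g : G), ∀ x ∈ M₀, g • x ∈ M₀) :
    auxChi d ψ M₀ ∈ injGMonoid G U := by
  have hrange : ∀ x : U, x ∉ M₀ → x ∈ Set.range d := by
    intro x hx; rw [hr]; exact hx
  have hinv_d : ∀ x ∈ Set.range d, d (Function.invFun d x) = x := by
    intro x hx; exact Function.invFun_eq hx
  constructor
  · intro x x' hxx'
    by_cases hx : x ∈ M₀ <;> by_cases hx' : x' ∈ M₀
    · simp only [auxChi] at hxx'
      rwa [if_pos hx, if_pos hx'] at hxx'
    · exfalso
      simp only [auxChi] at hxx'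
      rw [if_pos hx, if_neg hx'] at hxx'
      have : x ∈ Set.range d := ⟨ψ (Function.invFun d x'), hxx'.symm⟩
      rw [hr] at this; exact this hx
    · exfalso
      simp only [auxChi] at hxx'
      rw [if_neg hx, if_pos hx'] at hxx'
      have : x' ∈ Set.range d := ⟨ψ (Function.invFun d x), hxx'⟩
      rw [hr] at this; exact this hx'
    · simp only [auxChi] at hxx'
      rw [if_neg hx, if_neg hx'] at hxx'
      have h2 := hψinj (hinj hxx')
      calc x = d (Function.invFun d x) := (hinv_d x (hrange x hx)).symm
      _ = d (Function.invFun d x') := by rw [h2]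
      _ = x' := hinv_d x' (hrange x' hx')
  · intro g x
    by_cases hx : x ∈ M₀
    · rw [auxChi, if_pos (hMinv g x hx), auxChi, if_pos hx]
    · have hgx : g • x ∉ M₀ := fun h => hx (by
        have := hMinv g⁻¹ _ h
        rwa [inv_smul_smul] at this)
      rw [auxChi, if_neg hgx, auxChi, if_neg hx]
      have hxr : x ∈ Set.range d := hrange x hx
      have hgxr : g • x ∈ Set.range d := by
        rcases hxr with ⟨w, hw⟩
        exact ⟨g • w, by rw [hequiv, hw]⟩
      have key : Function.invFun d (g • x) = g • Function.invFun d x := by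
        apply hinj
        rw [hinv_d _ hgxr, hequiv, hinv_d _ hxr]
      rw [key, hψequiv, hequiv]

end AuxShift

/-- if `a` is not of filtration `∅` (some injection acts nontrivially on it)
and `d` is a shift by the finite `G`-subset `M₀` (a `G`-injection with image `𝒰 ∖ M₀`),
then `d • a` is not of filtration `M₀`: some injection fixing `M₀` pointwise acts
nontrivially on `d • a`. -/
theorem shift_not_filtration {G U A : Type*} [Group G] [MulAction G U]
    [AddCommGroup A] [DistribMulAction (↥(injGMonoid G U)) A]
    (huniv : IsGSetUniverse G U)
    (htame : ∀ a : A, ∃ M₀ : Set U, M₀.Finite ∧ (∀ (g : G), ∀ x ∈ M₀, g • x ∈ M₀) ∧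
      ∀ ψ : injGMonoid G U, (∀ x ∈ M₀, ψ.val x = x) → ψ • a = a)
    (M₀ : Set U) (hfin : M₀.Finite) (hinv : ∀ (g : G), ∀ x ∈ M₀, g • x ∈ M₀)
    (d : injGMonoid G U) (hd : Set.range (d.val : U → U) = M₀ᶜ)
    (a : A) (ha : ∃ ψ : injGMonoid G U, ψ • a ≠ a) :
    ∃ χ : injGMonoid G U, (∀ x ∈ M₀, χ.val x = x) ∧ χ • (d • a) ≠ d • a := by
  obtain ⟨hcount, hinf, -⟩ := huniv
  haveI : Nonempty U := inferInstance
  obtain ⟨ψ, hψ⟩ := ha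
  obtain ⟨hdinj, hdequiv⟩ := d.property
  obtain ⟨hψinj, hψequiv⟩ := ψ.property
  -- the conjugate χ
  refine ⟨⟨auxChi d.val ψ.val M₀,
    auxChi_mem hdinj hd hdequiv hψinj hψequiv hinv⟩,
    fun x hx => auxChi_fix x hx, ?_⟩
  set χ : injGMonoid G U := ⟨auxChi d.val ψ.val M₀,
    auxChi_mem hdinj hd hdequiv hψinj hψequiv hinv⟩ with hχ
  -- χ * d = d * ψ
  have hconj : χ * d = d * ψ := by
    apply Subtype.ext
    funext x
    show auxChi d.val ψ.val M₀ (d.val x) = d.val (ψ.val x)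
    exact auxChi_apply_d hdinj hd x
  intro hcontra
  -- hence d • (ψ • a) = d • a
  have hda : d • (ψ • a) = d • a := by
    calc d • (ψ • a) = (d * ψ) • a := (mul_smul d ψ a).symm
    _ = (χ * d) • a := by rw [hconj]
    _ = χ • (d • a) := mul_smul χ d a
    _ = d • a := hcontra
  -- tame filtration sets for a and ψ • a
  obtain ⟨Ma, hMaf, hMai, hMa⟩ := htame a
  obtain ⟨Mb, hMbf, hMbi, hMb⟩ := htame (ψ • a)
  set S : Set U := Ma ∪ Mb with hS
  have hSf : S.Finite := hMaf.union hMbf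
  -- the set of levels of elements of S is finite, hence bounded
  have hLf : Set.Finite {k : ℕ | ∃ s ∈ S, ∃ y ∈ M₀, d.val^[k] y = s} := by
    have hsub : {k : ℕ | ∃ s ∈ S, ∃ y ∈ M₀, d.val^[k] y = s} ⊆
        ⋃ s ∈ S, {k : ℕ | ∃ y ∈ M₀, d.val^[k] y = s} := by
      rintro k ⟨s, hs, hk⟩
      exact Set.mem_biUnion hs hk
    refine Set.Finite.subset (Set.Finite.biUnion hSf (fun s _ => ?_)) hsub
    apply Set.Subsingleton.finite
    rintro k ⟨y, hy, hky⟩ j ⟨y', hy', hjy'⟩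
    exact aux_level_unique hdinj hd k j y y' hy hy' (hky.trans hjy'.symm)
  obtain ⟨N, hN⟩ := hLf.bddAbove
  -- the one-sided inverse e of d on S
  set n : ℕ := N + 1 with hn
  have heSmem : auxE d.val M₀ n ∈ injGMonoid G U := auxE_mem hdinj hd hdequiv hinv n
  set e : injGMonoid G U := ⟨auxE d.val M₀ n, heSmem⟩ with he
  have hed : ∀ s ∈ S, (e * d).val s = s := by
    intro s hs
    show auxE d.val M₀ n (d.val s) = s
    apply auxE_apply_d hdinj hd
    intro k y hy hky
    have : k ∈ {k : ℕ | ∃ s ∈ S, ∃ y ∈ M₀, d.val^[k] y = s} := ⟨s, hs, y, hy, hky⟩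
    have := hN this
    omega
  have h1 : (e * d) • a = a := hMa (e * d) (fun x hx => hed x (Or.inl hx))
  have h2 : (e * d) • (ψ • a) = ψ • a := hMb (e * d) (fun x hx => hed x (Or.inr hx))
  apply hψ
  calc ψ • a = (e * d) • (ψ • a) := h2.symm
  _ = e • (d • (ψ • a)) := mul_smul e d (ψ • a)
  _ = e • (d • a) := by rw [hda]
  _ = (e * d) • a := (mul_smul e d a).symm
  _ = a := h1
end

section
/- Let 𝒰 be a G-set universe and A a tame module over the monoid M = Inj_G(𝒰,𝒰) of G-equivariant injections. If there exists a finite G-subset M₀ of 𝒰 such that every element of A is of filtration M₀, then the M-action on A is trivial (every ψ ∈ M acts as the identity). -/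
/-- if there is a single finite `G`-subset `M₀` of the `G`-set universe `𝒰`
such that every element of the tame module `A` is of filtration `M₀`, then the action of
`Inj_G(𝒰,𝒰)` on `A` is trivial. -/
theorem trivial_action_of_uniform_filtration {G U A : Type*} [Group G] [MulAction G U]
    [AddCommGroup A] [DistribMulAction (↥(injGMonoid G U)) A]
    (huniv : IsGSetUniverse G U)
    (htame : ∀ a : A, ∃ M₀ : Set U, M₀.Finite ∧ (∀ (g : G), ∀ x ∈ M₀, g • x ∈ M₀) ∧
      ∀ ψ : injGMonoid G U, (∀ x ∈ M₀, ψ.val x = x) → ψ • a = a)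
    (M₀ : Set U) (hfin : M₀.Finite) (hinv : ∀ (g : G), ∀ x ∈ M₀, g • x ∈ M₀)
    (hall : ∀ a : A, ∀ ψ : injGMonoid G U, (∀ x ∈ M₀, ψ.val x = x) → ψ • a = a) :
    ∀ (ψ : injGMonoid G U) (a : A), ψ • a = a := by
  classical
  obtain ⟨-, hinf, e, hE⟩ := huniv
  intro ψ a
  obtain ⟨ψf, hψinj, hψeq⟩ := ψ
  -- equivariance of e.symm
  have hEsymm : ∀ (g : G) (s : U ⊕ U),
      e.symm (Sum.map (fun y => g • y) (fun y => g • y) s) = g • e.symm s := by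
    intro g s
    apply e.injective
    rw [Equiv.apply_symm_apply, hE, Equiv.apply_symm_apply]
  set α : U → U := fun x => e.symm (Sum.inl x) with hαdef
  set β : U → U := fun x => e.symm (Sum.inr x) with hβdef
  have hαinj : Function.Injective α := by
    intro x y h
    have := e.symm.injective h
    exact Sum.inl.inj this
  have hβinj : Function.Injective β := by
    intro x y h
    have := e.symm.injective h
    exact Sum.inr.inj this
  have hβeq : ∀ (g : G) (x : U), β (g • x) = g • β x := by
    intro g x
    have := hEsymm g (Sum.inr x)
    simpa [hβdef] using this
  have hαβ : ∀ x y, α x ≠ β y := by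
    intro x y h
    have := e.symm.injective h
    simp at this
  have hβiter : ∀ (n : ℕ) (g : G) (x : U), β^[n] (g • x) = g • β^[n] x := by
    intro n
    induction n with
    | zero => intro g x; simp
    | succ n ih =>
      intro g x
      rw [Function.iterate_succ_apply', Function.iterate_succ_apply', ih, hβeq]
  -- the sets β^[n] '' (range α) are pairwise disjoint
  set S : ℕ → Set U := fun n => β^[n] '' Set.range α with hSdef
  have hdisj' : ∀ m n : ℕ, m < n → ∀ z, z ∈ S m → z ∈ S n → False := by
    intro m n hmn z hz1 hz2
    obtain ⟨x, ⟨x', rfl⟩, hx⟩ := hz1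
    obtain ⟨y, ⟨y', rfl⟩, hy⟩ := hz2
    rw [← hx] at hy
    have hn : n = m + (n - m) := by omega
    rw [hn, Function.iterate_add_apply] at hy
    have h1 : β^[n - m] (α y') = α x' := (hβinj.iterate m) hy
    obtain ⟨k, hk⟩ : ∃ k, n - m = k + 1 := ⟨n - m - 1, by omega⟩
    rw [hk, Function.iterate_succ_apply'] at h1
    exact hαβ x' (β^[k] (α y')) h1.symm
  have hdisj : ∀ m n : ℕ, m ≠ n → ∀ z, z ∈ S m → z ∈ S n → False := by
    intro m n hmn z hz1 hz2
    rcases lt_or_gt_of_ne hmn with h | h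
    · exact hdisj' m n h z hz1 hz2
    · exact hdisj' n m h z hz2 hz1
  -- pigeonhole: some S n avoids M₀
  obtain ⟨n, hn⟩ : ∃ n : ℕ, ∀ x ∈ M₀, x ∉ S n := by
    by_contra h
    push_neg at h
    choose c hc1 hc2 using h
    have cinj : Function.Injective c := by
      intro m n hmn
      by_contra hne
      exact hdisj m n hne (c m) (hc2 m) (hmn ▸ hc2 n)
    exact (hfin.subset (Set.range_subset_iff.mpr hc1)).not_infinite
      (Set.infinite_range_of_injective cinj)
  -- the equivariant injection i with image avoiding M₀
  set i : U → U := fun x => β^[n] (α x) with hidef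
  have hiM : ∀ x, i x ∉ M₀ := by
    intro x hx
    exact hn (i x) hx ⟨α x, ⟨x, rfl⟩, rfl⟩
  have hiinj : Function.Injective i := fun x y h => hαinj ((hβinj.iterate n) h)
  have hieq : ∀ (g : G) (x : U), i (g • x) = g • i x := by
    intro g x
    have h1 : α (g • x) = g • α x := by
      have := hEsymm g (Sum.inl x)
      simpa [hαdef] using this
    simp only [hidef, h1, hβiter]
  have hiiter : ∀ (k : ℕ) (g : G) (x : U), i^[k] (g • x) = g • i^[k] x := by
    intro k
    induction k with
    | zero => intro g x; simp
    | succ k ih =>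
      intro g x
      rw [Function.iterate_succ_apply', Function.iterate_succ_apply', ih, hieq]
  -- Hilbert hotel: d is an equivariant bijection U → U \ M₀
  set Z : Set U := ⋃ k : ℕ, i^[k] '' M₀ with hZdef
  have hM₀Z : M₀ ⊆ Z := fun x hx => Set.mem_iUnion.mpr ⟨0, by simpa using hx⟩
  have hiZ : ∀ x ∈ Z, i x ∈ Z := by
    intro x hx
    obtain ⟨k, y, hy, rfl⟩ := by simpa [hZdef, Set.mem_iUnion] using hx
    exact Set.mem_iUnion.mpr ⟨k + 1, y, hy, Function.iterate_succ_apply' i k y⟩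
  have hZinv : ∀ (g : G) (x : U), x ∈ Z → g • x ∈ Z := by
    intro g x hx
    obtain ⟨k, y, hy, rfl⟩ := by simpa [hZdef, Set.mem_iUnion] using hx
    exact Set.mem_iUnion.mpr ⟨k, g • y, hinv g y hy, hiiter k g y⟩
  have hZiff : ∀ (g : G) (x : U), g • x ∈ Z ↔ x ∈ Z := by
    intro g x
    constructor
    · intro h
      have := hZinv g⁻¹ _ h
      simpa using this
    · exact hZinv g x
  set d : U → U := fun x => if x ∈ Z then i x else x with hddef
  have hdM : ∀ x, d x ∉ M₀ := by
    intro x hx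
    by_cases h : x ∈ Z
    · rw [hddef] at hx; simp only [if_pos h] at hx; exact hiM x hx
    · rw [hddef] at hx; simp only [if_neg h] at hx; exact h (hM₀Z hx)
  have hdinj : Function.Injective d := by
    intro x y h
    simp only [hddef] at h
    by_cases hx : x ∈ Z <;> by_cases hy : y ∈ Z
    · rw [if_pos hx, if_pos hy] at h; exact hiinj h
    · rw [if_pos hx, if_neg hy] at h
      exact absurd (h ▸ hiZ x hx) hy
    · rw [if_neg hx, if_pos hy] at h
      exact absurd (h ▸ hiZ y hy) hx
    · rw [if_neg hx, if_neg hy] at h; exact h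
  have hdeq : ∀ (g : G) (x : U), d (g • x) = g • d x := by
    intro g x
    by_cases hx : x ∈ Z
    · simp only [hddef, if_pos hx, if_pos ((hZiff g x).mpr hx), hieq]
    · simp only [hddef, if_neg hx, if_neg (fun h => hx ((hZiff g x).mp h))]
  have hdsurj : ∀ y, y ∉ M₀ → ∃ x, d x = y := by
    intro y hy
    by_cases hyZ : y ∈ Z
    · obtain ⟨k, w, hw, rfl⟩ := by simpa [hZdef, Set.mem_iUnion] using hyZ
      obtain ⟨k, rfl⟩ : ∃ k', k = k' + 1 := by
        rcases k with _ | k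
        · exact absurd (by simpa using hw) hy
        · exact ⟨k, rfl⟩
      refine ⟨i^[k] w, ?_⟩
      have hmem : i^[k] w ∈ Z := Set.mem_iUnion.mpr ⟨k, w, hw, rfl⟩
      simp only [hddef, if_pos hmem]
      exact (Function.iterate_succ_apply' i k w).symm
    · exact ⟨y, by simp only [hddef, if_neg hyZ]⟩
  -- inverse of d on its range
  haveI : Nonempty U := inferInstance
  set dinv : U → U := Function.invFun d with hdinvdef
  have hdinvd : ∀ x, dinv (d x) = x := fun x => hdinj (Function.invFun_eq ⟨x, rfl⟩)
  -- the conjugated map φ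
  set φ : U → U := fun y => if y ∈ M₀ then y else d (ψf (dinv y)) with hφdef
  have hφM : ∀ x ∈ M₀, φ x = x := fun x hx => by simp only [hφdef, if_pos hx]
  have hφd : ∀ x, φ (d x) = d (ψf x) := by
    intro x
    simp only [hφdef, if_neg (hdM x), hdinvd]
  have hφinj : Function.Injective φ := by
    intro y₁ y₂ h
    by_cases h₁ : y₁ ∈ M₀ <;> by_cases h₂ : y₂ ∈ M₀
    · rwa [hφM y₁ h₁, hφM y₂ h₂] at h
    · obtain ⟨x₂, rfl⟩ := hdsurj y₂ h₂
      rw [hφM y₁ h₁, hφd] at h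
      exact absurd (h ▸ h₁) (hdM (ψf x₂))
    · obtain ⟨x₁, rfl⟩ := hdsurj y₁ h₁
      rw [hφM y₂ h₂, hφd] at h
      exact absurd (h.symm ▸ h₂) (hdM (ψf x₁))
    · obtain ⟨x₁, rfl⟩ := hdsurj y₁ h₁
      obtain ⟨x₂, rfl⟩ := hdsurj y₂ h₂
      rw [hφd, hφd] at h
      exact congrArg d (hψinj (hdinj h))
  have hM₀iff : ∀ (g : G) (y : U), g • y ∈ M₀ ↔ y ∈ M₀ := by
    intro g y
    constructor
    · intro h; have := hinv g⁻¹ _ h; simpa using this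
    · exact hinv g y
  have hφeq : ∀ (g : G) (y : U), φ (g • y) = g • φ y := by
    intro g y
    by_cases hy : y ∈ M₀
    · rw [hφM _ hy, hφM _ ((hM₀iff g y).mpr hy)]
    · obtain ⟨x, rfl⟩ := hdsurj y hy
      rw [← hdeq, hφd, hφd, hψeq, hdeq]
  -- the partial left inverse e'
  set e' : U → U := fun y => if y ∈ d '' M₀ then dinv y else d y with he'def
  have he'd : ∀ x ∈ M₀, e' (d x) = x := by
    intro x hx
    simp only [he'def, if_pos (Set.mem_image_of_mem d hx), hdinvd]
  have he'inj : Function.Injective e' := by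
    intro y₁ y₂ h
    by_cases h₁ : y₁ ∈ d '' M₀ <;> by_cases h₂ : y₂ ∈ d '' M₀
    · obtain ⟨x₁, hx₁, rfl⟩ := h₁
      obtain ⟨x₂, hx₂, rfl⟩ := h₂
      rw [he'd x₁ hx₁, he'd x₂ hx₂] at h
      exact congrArg d h
    · obtain ⟨x₁, hx₁, rfl⟩ := h₁
      rw [he'd x₁ hx₁] at h
      rw [he'def] at h
      simp only [if_neg h₂] at h
      exact absurd (h ▸ hx₁) (hdM y₂)
    · obtain ⟨x₂, hx₂, rfl⟩ := h₂
      rw [he'd x₂ hx₂] at h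
      rw [he'def] at h
      simp only [if_neg h₁] at h
      exact absurd (h.symm ▸ hx₂) (hdM y₁)
    · simp only [he'def, if_neg h₁, if_neg h₂] at h
      exact hdinj h
  have hdMiff : ∀ (g : G) (y : U), g • y ∈ d '' M₀ ↔ y ∈ d '' M₀ := by
    have fwd : ∀ (g : G) (y : U), y ∈ d '' M₀ → g • y ∈ d '' M₀ := by
      rintro g y ⟨x, hx, rfl⟩
      exact ⟨g • x, hinv g x hx, hdeq g x⟩
    intro g y
    constructor
    · intro h; have := fwd g⁻¹ _ h; simpa using this
    · exact fwd g y
  have he'eq : ∀ (g : G) (y : U), e' (g • y) = g • e' y := by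
    intro g y
    by_cases hy : y ∈ d '' M₀
    · obtain ⟨x, hx, rfl⟩ := hy
      rw [← hdeq, he'd _ (hinv g x hx), he'd x hx]
    · simp only [he'def, if_neg hy, if_neg (fun h => hy ((hdMiff g y).mp h)), hdeq]
  -- package the maps as elements of the monoid
  set Ψ : injGMonoid G U := ⟨ψf, hψinj, hψeq⟩ with hΨdef
  set D : injGMonoid G U := ⟨d, hdinj, hdeq⟩ with hDdef
  set Φ : injGMonoid G U := ⟨φ, hφinj, hφeq⟩ with hΦdef
  set E : injGMonoid G U := ⟨e', he'inj, he'eq⟩ with hEdef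
  have hED : ∀ x ∈ M₀, (E * D).val x = x := by
    intro x hx
    show e' (d x) = x
    exact he'd x hx
  have hDΨ : D * Ψ = Φ * D := by
    apply Subtype.ext
    funext x
    exact (hφd x).symm
  calc Ψ • a = (E * D) • (Ψ • a) := (hall _ (E * D) hED).symm
    _ = E • ((D * Ψ) • a) := by rw [mul_smul, mul_smul]
    _ = E • ((Φ * D) • a) := by rw [hDΨ]
    _ = E • (Φ • (D • a)) := by rw [mul_smul]
    _ = E • (D • a) := by rw [hall (D • a) Φ (fun x hx => hφM x hx)]
    _ = (E * D) • a := by rw [mul_smul]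
    _ = a := hall a (E * D) hED
end

section
/- Let 𝒰 be a G-set universe and A a tame module over the monoid M = Inj_G(𝒰,𝒰). If A is finitely generated as an abelian group, then the M-action on A is trivial. -/
lemma mem_injGMonoid {G U : Type*} [Group G] [MulAction G U] {f : Function.End U} :
    f ∈ injGMonoid G U ↔
      Function.Injective f ∧ ∀ (g : G) (x : U), f (g • x) = g • f x :=
  Iff.rfl

/-- Key lemma: if `χ` is a `G`-equivariant injection whose image avoids the uniform
filtration set `M₀`, then `χ` acts trivially. -/
lemma key_triv {G U A : Type*} [Group G] [MulAction G U] [AddCommGroup A]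
    [DistribMulAction (↥(injGMonoid G U)) A]
    (M₀ : Set U) (hstab : ∀ (g : G), ∀ x ∈ M₀, g • x ∈ M₀)
    (huni : ∀ ψ : injGMonoid G U, (∀ x ∈ M₀, ψ.val x = x) → ∀ a : A, ψ • a = a)
    (hne : Nonempty U)
    (χ : injGMonoid G U) (hχ : ∀ y : U, χ.val y ∉ M₀) (a : A) : χ • a = a := by
  classical
  haveI := hne
  obtain ⟨hinj, hequi⟩ := (mem_injGMonoid).1 χ.2
  set c : U → U := χ.val with hc
  -- the range of c is G-stable
  have hrange : ∀ (g : G) (y : U), y ∈ Set.range c → (g • y) ∈ Set.range c := by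
    rintro g y ⟨z, rfl⟩; exact ⟨g • z, hequi g z⟩
  have hrange' : ∀ (g : G) (y : U), (g • y) ∈ Set.range c → y ∈ Set.range c := by
    intro g y hy
    have := hrange g⁻¹ _ hy
    rwa [inv_smul_smul] at this
  -- μ : equal to c on the range of c, identity elsewhere
  set μf : U → U := fun y => if y ∈ Set.range c then c y else y with hμf
  have hμmem : μf ∈ injGMonoid G U := by
    constructor
    · intro u v huv
      simp only [hμf] at huv
      by_cases hu : u ∈ Set.range c <;> by_cases hv : v ∈ Set.range c
      · rw [if_pos hu, if_pos hv] at huv; exact hinj huv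
      · rw [if_pos hu, if_neg hv] at huv
        exact absurd (huv ▸ Set.mem_range_self u) hv
      · rw [if_neg hu, if_pos hv] at huv
        exact absurd (huv ▸ Set.mem_range_self v) hu
      · rwa [if_neg hu, if_neg hv] at huv
    · intro g y
      simp only [hμf]
      by_cases hy : y ∈ Set.range c
      · rw [if_pos (hrange g y hy), if_pos hy, hequi]
      · rw [if_neg (fun h => hy (hrange' g y h)), if_neg hy]
  set μ : injGMonoid G U := ⟨μf, hμmem⟩ with hμ
  have hμfix : ∀ x ∈ M₀, μ.val x = x := by
    intro x hx
    show μf x = x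
    simp only [hμf]
    rw [if_neg]
    rintro ⟨y, rfl⟩
    exact hχ y hx
  have hcomp : μ * χ = χ * χ := by
    apply Subtype.ext
    funext x
    show μf (c x) = c (c x)
    simp only [hμf]
    rw [if_pos (Set.mem_range_self x)]
  -- idempotency of the action of χ
  have hidem : ∀ b : A, χ • (χ • b) = χ • b := by
    intro b
    calc χ • (χ • b) = (χ * χ) • b := (mul_smul χ χ b).symm
      _ = (μ * χ) • b := by rw [hcomp]
      _ = μ • (χ • b) := mul_smul μ χ b
      _ = χ • b := huni μ hμfix (χ • b)
  -- τ : inverse of c on c '' M₀, equal to c elsewhere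
  set τf : U → U := fun y => if y ∈ c '' M₀ then Function.invFun c y else c y with hτf
  have hleft : ∀ x : U, Function.invFun c (c x) = x := fun x =>
    Function.leftInverse_invFun hinj x
  have himg : ∀ (g : G) (y : U), y ∈ c '' M₀ → (g • y) ∈ c '' M₀ := by
    rintro g y ⟨x, hx, rfl⟩
    exact ⟨g • x, hstab g x hx, hequi g x⟩
  have himg' : ∀ (g : G) (y : U), (g • y) ∈ c '' M₀ → y ∈ c '' M₀ := by
    intro g y hy
    have := himg g⁻¹ _ hy
    rwa [inv_smul_smul] at this
  have hτmem : τf ∈ injGMonoid G U := by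
    constructor
    · intro u v huv
      simp only [hτf] at huv
      by_cases hu : u ∈ c '' M₀ <;> by_cases hv : v ∈ c '' M₀
      · obtain ⟨x, hx, rfl⟩ := hu; obtain ⟨x', hx', rfl⟩ := hv
        rw [if_pos ⟨x, hx, rfl⟩, if_pos ⟨x', hx', rfl⟩, hleft, hleft] at huv
        rw [huv]
      · obtain ⟨x, hx, rfl⟩ := hu
        rw [if_pos ⟨x, hx, rfl⟩, if_neg hv, hleft] at huv
        exact absurd (huv ▸ hx) (hχ v)
      · obtain ⟨x, hx, rfl⟩ := hv
        rw [if_neg hu, if_pos ⟨x, hx, rfl⟩, hleft] at huv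
        exact absurd (huv ▸ hx) (hχ u)
      · rw [if_neg hu, if_neg hv] at huv
        exact hinj huv
    · intro g y
      simp only [hτf]
      by_cases hy : y ∈ c '' M₀
      · obtain ⟨x, hx, rfl⟩ := hy
        rw [if_pos (himg g _ ⟨x, hx, rfl⟩), if_pos ⟨x, hx, rfl⟩, hleft, ← hequi, hleft]
      · rw [if_neg (fun h => hy (himg' g y h)), if_neg hy, hequi]
  set τ : injGMonoid G U := ⟨τf, hτmem⟩ with hτ
  have hτχ : ∀ x ∈ M₀, (τ * χ).val x = x := by
    intro x hx
    show τf (c x) = x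
    simp only [hτf]
    rw [if_pos ⟨x, hx, rfl⟩, hleft]
  have hret : ∀ b : A, τ • (χ • b) = b := by
    intro b
    rw [← mul_smul]
    exact huni (τ * χ) hτχ b
  rw [← hret (χ • a), hidem, hret]

/-- Uniform filtration implies trivial action. -/
lemma uniform_triv {G U A : Type*} [Group G] [MulAction G U] [AddCommGroup A]
    [DistribMulAction (↥(injGMonoid G U)) A]
    (huniv : IsGSetUniverse G U)
    (M₀ : Set U) (hfin : M₀.Finite) (hstab : ∀ (g : G), ∀ x ∈ M₀, g • x ∈ M₀)
    (huni : ∀ ψ : injGMonoid G U, (∀ x ∈ M₀, ψ.val x = x) → ∀ a : A, ψ • a = a) :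
    ∀ (ψ : injGMonoid G U) (a : A), ψ • a = a := by
  classical
  obtain ⟨-, hinf, e, he⟩ := huniv
  haveI := hinf
  set i₁ : U → U := fun x => e.symm (Sum.inl x) with hi₁
  set i₂ : U → U := fun x => e.symm (Sum.inr x) with hi₂
  have hi₁inj : Function.Injective i₁ := fun u v h => by
    simpa using e.symm.injective h
  have hi₂inj : Function.Injective i₂ := fun u v h => by
    simpa using e.symm.injective h
  have hi₂equi : ∀ (g : G) (x : U), i₂ (g • x) = g • i₂ x := by
    intro g x
    apply e.injective
    rw [he g (i₂ x)]
    simp [hi₂]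
  have hi₁equi : ∀ (g : G) (x : U), i₁ (g • x) = g • i₁ x := by
    intro g x
    apply e.injective
    rw [he g (i₁ x)]
    simp [hi₁]
  have hdisj12 : ∀ x y : U, i₁ x ≠ i₂ y := by
    intro x y h
    have := e.symm.injective (a₁ := Sum.inl x) (a₂ := Sum.inr y) h
    simp at this
  -- iterates of i₂
  have hiterinj : ∀ n : ℕ, Function.Injective (i₂^[n]) := fun n => hi₂inj.iterate n
  have hiterequi : ∀ (n : ℕ) (g : G) (x : U), i₂^[n] (g • x) = g • i₂^[n] x := by
    intro n
    induction n with
    | zero => intro g x; simp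
    | succ n ih =>
      intro g x
      rw [Function.iterate_succ_apply', Function.iterate_succ_apply', ih, hi₂equi]
  -- pairwise disjointness of the images of i₂^[n] ∘ i₁
  have hdisj : ∀ (m n : ℕ) (x y : U), m < n → i₂^[m] (i₁ x) ≠ i₂^[n] (i₁ y) := by
    intro m n x y hmn h
    obtain ⟨k, rfl⟩ : ∃ k, n = m + (k + 1) := ⟨n - m - 1, by omega⟩
    rw [Function.iterate_add_apply] at h
    have h2 : i₁ x = i₂^[k + 1] (i₁ y) := hiterinj m h
    rw [Function.iterate_succ_apply'] at h2
    exact hdisj12 x (i₂^[k] (i₁ y)) h2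
  -- choose n with the image of i₂^[n] ∘ i₁ disjoint from M₀
  have hex : ∃ n : ℕ, ∀ x : U, i₂^[n] (i₁ x) ∉ M₀ := by
    by_contra h
    push_neg at h
    choose f hf using h
    have hginj : Function.Injective (fun n : ℕ => i₂^[n] (i₁ (f n))) := by
      intro m n hmn
      by_contra hne
      rcases Nat.lt_or_ge m n with h' | h'
      · exact hdisj m n (f m) (f n) h' hmn
      · exact hdisj n m (f n) (f m) (by omega) hmn.symm
    exact (Set.infinite_of_injective_forall_mem hginj hf) hfin
  obtain ⟨n, hn⟩ := hex
  have hφmem : (fun x => i₂^[n] (i₁ x)) ∈ injGMonoid G U := by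
    constructor
    · intro u v h
      exact hi₁inj (hiterinj n h)
    · intro g x
      show i₂^[n] (i₁ (g • x)) = g • i₂^[n] (i₁ x)
      rw [hi₁equi, hiterequi]
  set φ : injGMonoid G U := ⟨fun x => i₂^[n] (i₁ x), hφmem⟩ with hφ
  have hφM : ∀ y : U, φ.val y ∉ M₀ := hn
  have hφtriv : ∀ b : A, φ • b = b := key_triv M₀ hstab huni inferInstance φ hφM
  intro ψ a
  have h1 : ∀ y : U, (φ * ψ).val y ∉ M₀ := fun y => hn (ψ.val y)
  have h2 : (φ * ψ) • a = a := key_triv M₀ hstab huni inferInstance (φ * ψ) h1 a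
  rw [mul_smul, hφtriv (ψ • a)] at h2
  exact h2

/-- a tame module over the monoid of `G`-equivariant injective self-maps of
a `G`-set universe which is finitely generated as an abelian group has trivial action. -/
theorem trivial_action_of_fg {G U A : Type*} [Group G] [MulAction G U]
    [AddCommGroup A] [DistribMulAction (↥(injGMonoid G U)) A]
    (huniv : IsGSetUniverse G U)
    (htame : ∀ a : A, ∃ M₀ : Set U, M₀.Finite ∧ (∀ (g : G), ∀ x ∈ M₀, g • x ∈ M₀) ∧
      ∀ ψ : injGMonoid G U, (∀ x ∈ M₀, ψ.val x = x) → ψ • a = a)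
    (hfg : AddGroup.FG A) :
    ∀ (ψ : injGMonoid G U) (a : A), ψ • a = a := by
  classical
  obtain ⟨S, hScl, hSfin⟩ := AddGroup.fg_iff.1 hfg
  choose F hFfin hFstab hFfix using htame
  set M₀ : Set U := ⋃ s ∈ S, F s with hM₀
  have hfin : M₀.Finite := Set.Finite.biUnion hSfin (fun s _ => hFfin s)
  have hstab : ∀ (g : G), ∀ x ∈ M₀, g • x ∈ M₀ := by
    intro g x hx
    simp only [hM₀, Set.mem_iUnion] at hx ⊢
    obtain ⟨s, hs, hxs⟩ := hx
    exact ⟨s, hs, hFstab s g x hxs⟩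
  have huni : ∀ ψ : injGMonoid G U, (∀ x ∈ M₀, ψ.val x = x) → ∀ a : A, ψ • a = a := by
    intro ψ hψ
    set B : AddSubgroup A :=
      { carrier := {a | ψ • a = a}
        zero_mem' := smul_zero ψ
        add_mem' := fun {a b} ha hb => by
          simp only [Set.mem_setOf_eq] at *
          rw [smul_add, ha, hb]
        neg_mem' := fun {a} ha => by
          simp only [Set.mem_setOf_eq] at *
          rw [smul_neg, ha] } with hB
    have hSle : S ⊆ (B : Set A) := by
      intro s hs
      show ψ • s = s
      refine hFfix s ψ (fun x hx => hψ x ?_)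
      simp only [hM₀, Set.mem_iUnion]
      exact ⟨s, hs, hx⟩
    have : AddSubgroup.closure S ≤ B := AddSubgroup.closure_le B |>.2 hSle
    intro a
    exact this (hScl ▸ AddSubgroup.mem_top a)
  exact uniform_triv huniv M₀ hfin hstab huni
end
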